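/- Let Y be a linear threshold unit with n binary inputs and threshold k (1 ≤ k ≤ n), and let v ∈ {0,1}^n be an actual input state with Σ_i v_i < k (so the actual outcome is Y = 0). Then the actual-cause candidate set x*(0) of the occurrence {Y = 0} is exactly the set of restrictions v|S with |S| = n − k + 1 and v_i = 0 for every i ∈ S. That is, an LTU in the off state behaves like an LTU with the roles of 0 and 1 reversed and threshold n − k + 1. -/

import Mathlib

open Finset

/-- Number of inputs in state `1` (true). -/
def ones {n : ℕ} (u : Fin n → Bool) : ℕ := (univ.filter fun i => u i = true).card

/-- Linear threshold unit with threshold `k`: outputs `1` iff at least `k` inputs are `1`. -/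
def LTU {n : ℕ} (k : ℕ) (u : Fin n → Bool) : Bool := decide (k ≤ ones u)

/-- Effect probability `π(y | v|S) = 2^{-(n-|S|)} · #{u : u agrees with v on S ∧ Y u = y}`. -/
noncomputable def effProb {n : ℕ} (Y : (Fin n → Bool) → Bool) (v : Fin n → Bool)
    (S : Finset (Fin n)) (y : Bool) : ℝ :=
  ((univ.filter fun u : Fin n → Bool => (∀ i ∈ S, u i = v i) ∧ Y u = y).card : ℝ) /
    2 ^ (n - S.card)

/-- Cause ratio `ρ(v|S) = log₂(π(y | v|S) / π(y))`, where `π(y) = π(y | v|∅)`. -/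
noncomputable def causeRatio {n : ℕ} (Y : (Fin n → Bool) → Bool) (v : Fin n → Bool)
    (S : Finset (Fin n)) (y : Bool) : ℝ :=
  Real.logb 2 (effProb Y v S y / effProb Y v ∅ y)

/-- The actual-cause candidate set `x*(y)`: occurrences `v|S` maximizing the cause ratio `ρ`
over all subsets `S ⊆ {1,…,n}` and such that no proper subset attains the maximum. -/
def causeCandidates {n : ℕ} (Y : (Fin n → Bool) → Bool) (v : Fin n → Bool) (y : Bool) :
    Set (Finset (Fin n)) :=
  {S | (∀ T : Finset (Fin n), causeRatio Y v T y ≤ causeRatio Y v S y) ∧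
    ∀ T ⊂ S, causeRatio Y v T y ≠ causeRatio Y v S y}

section aux
variable {n : ℕ} {k : ℕ} {v : Fin n → Bool}

lemma card_agree (S : Finset (Fin n)) :
    (univ.filter fun u : Fin n → Bool => ∀ i ∈ S, u i = v i).card = 2 ^ (n - S.card) := by
  have h : (univ.filter fun u : Fin n → Bool => ∀ i ∈ S, u i = v i)
      = Fintype.piFinset (fun i => if i ∈ S then {v i} else univ) := by
    ext u
    simp only [mem_filter, mem_univ, true_and, Fintype.mem_piFinset]
    constructor
    · intro h i
      by_cases hi : i ∈ S <;> simp [hi, h]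
    · intro h i hi
      have := h i
      simpa [hi] using this
  rw [h, Fintype.card_piFinset]
  have h2 : ∀ i : Fin n, (if i ∈ S then ({v i} : Finset Bool) else univ).card
      = if i ∈ S then 1 else 2 := by
    intro i; split <;> simp
  simp only [h2]
  rw [Finset.prod_ite, Finset.prod_const, Finset.prod_const]
  have : (univ.filter fun i => i ∉ S) = Sᶜ := by ext i; simp
  simp [this, Finset.card_compl]

lemma ones_le (u : Fin n → Bool) : ones u ≤ n := by
  simpa [ones] using (Finset.card_filter_le univ fun i => u i = true)

lemma ones_add_zeros (u : Fin n → Bool) :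
    ones u + (univ.filter fun i => u i = false).card = n := by
  have := Finset.card_filter_add_card_filter_not (s := (univ : Finset (Fin n)))
    (p := fun i => u i = true)
  simp only [Bool.not_eq_true, Finset.card_univ, Fintype.card_fin] at this
  simpa [ones] using this
end aux

section key
variable {n k : ℕ} {v : Fin n → Bool}

/-- zeros of `v` within `S`. -/
def zS (v : Fin n → Bool) (S : Finset (Fin n)) : ℕ := (S.filter fun i => v i = false).card

lemma key_iff (hk1 : 1 ≤ k) (hkn : k ≤ n) (S : Finset (Fin n)) :
    (∀ u : Fin n → Bool, (∀ i ∈ S, u i = v i) → LTU k u = false) ↔ n - k + 1 ≤ zS v S := by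
  constructor
  · intro h
    by_contra hc
    push_neg at hc
    have hz : zS v S ≤ n - k := by omega
    set u : Fin n → Bool := fun i => if i ∈ S then v i else true with hu
    have hagree : ∀ i ∈ S, u i = v i := fun i hi => by simp [hu, hi]
    have hfalse : (univ.filter fun i => u i = false) = S.filter fun i => v i = false := by
      ext i
      simp only [mem_filter, mem_univ, true_and, hu]
      constructor
      · intro hi
        by_cases h' : i ∈ S
        · simpa [h'] using And.intro h' (by simpa [h'] using hi)
        · simp [h'] at hi
      · rintro ⟨h1, h2⟩; simp [h1, h2]
    have hones : ones u + zS v S = n := by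
      have := ones_add_zeros u
      rwa [hfalse] at this
    have : k ≤ ones u := by omega
    have := h u hagree
    simp [LTU, this] at *
    omega
  · intro h u hagree
    have hsub : (univ.filter fun i => u i = true) ⊆ (S.filter fun i => v i = false)ᶜ := by
      intro i hi
      simp only [mem_filter, mem_univ, true_and] at hi
      simp only [Finset.mem_compl, mem_filter]
      rintro ⟨h1, h2⟩
      rw [hagree i h1, h2] at hi
      exact Bool.false_ne_true hi
    have hcard : ones u ≤ n - zS v S := by
      have := Finset.card_le_card hsub
      rwa [Finset.card_compl, Fintype.card_fin] at this
    have hzn : zS v S ≤ n := le_trans (Finset.card_filter_le _ _) (by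
      simpa using Finset.card_le_card (Finset.subset_univ S))
    have : ones u < k := by omega
    simp [LTU, Nat.not_le.mpr this]
end key

section eff
variable {n k : ℕ} {v : Fin n → Bool}

lemma effProb_pos (hv : ones v < k) (S : Finset (Fin n)) :
    0 < effProb (LTU k) v S false := by
  apply div_pos _ (by positivity)
  have hmem : v ∈ univ.filter fun u : Fin n → Bool =>
      (∀ i ∈ S, u i = v i) ∧ LTU k u = false := by
    simp only [mem_filter, mem_univ, true_and, LTU, decide_eq_false_iff_not, Nat.not_le]
    exact ⟨fun _ _ => trivial, hv⟩
  have := Finset.card_pos.mpr ⟨v, hmem⟩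
  exact_mod_cast this

lemma effProb_le_one (S : Finset (Fin n)) :
    effProb (LTU k) v S false ≤ 1 := by
  rw [effProb, div_le_one (by positivity)]
  calc ((univ.filter fun u : Fin n → Bool => (∀ i ∈ S, u i = v i) ∧ LTU k u = false).card : ℝ)
      ≤ ((univ.filter fun u : Fin n → Bool => ∀ i ∈ S, u i = v i).card : ℝ) := by
        exact_mod_cast Finset.card_le_card (Finset.monotone_filter_right univ
          (fun u _ (h : (∀ i ∈ S, u i = v i) ∧ LTU k u = false) => h.1))
    _ = 2 ^ (n - S.card) := by rw [card_agree]; push_cast; ring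

lemma effProb_eq_one_iff (S : Finset (Fin n)) :
    effProb (LTU k) v S false = 1 ↔
      ∀ u : Fin n → Bool, (∀ i ∈ S, u i = v i) → LTU k u = false := by
  rw [effProb, div_eq_one_iff_eq (by positivity)]
  constructor
  · intro h u hu
    have hcard : (univ.filter fun u : Fin n → Bool =>
        (∀ i ∈ S, u i = v i) ∧ LTU k u = false).card = 2 ^ (n - S.card) := by
      exact_mod_cast h
    have heq : (univ.filter fun u : Fin n → Bool => (∀ i ∈ S, u i = v i) ∧ LTU k u = false)
        = univ.filter fun u : Fin n → Bool => ∀ i ∈ S, u i = v i := by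
      apply Finset.eq_of_subset_of_card_le
      · exact Finset.monotone_filter_right univ
          (fun u _ (h : (∀ i ∈ S, u i = v i) ∧ LTU k u = false) => h.1)
      · rw [card_agree, hcard]
    have : u ∈ univ.filter fun u : Fin n → Bool => ∀ i ∈ S, u i = v i := by
      simp only [mem_filter, mem_univ, true_and]; exact hu
    rw [← heq] at this
    simp only [mem_filter] at this
    exact this.2.2
  · intro h
    have heq : (univ.filter fun u : Fin n → Bool => (∀ i ∈ S, u i = v i) ∧ LTU k u = false)
        = univ.filter fun u : Fin n → Bool => ∀ i ∈ S, u i = v i := by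
      ext u; simp only [mem_filter, mem_univ, true_and]
      exact ⟨fun h' => h'.1, fun h' => ⟨h', h u h'⟩⟩
    rw [heq, card_agree]; push_cast; ring
end eff

section final
variable {n k : ℕ} {v : Fin n → Bool}

lemma causeRatio_le_iff (hv : ones v < k) (T S : Finset (Fin n)) :
    causeRatio (LTU k) v T false ≤ causeRatio (LTU k) v S false ↔
      effProb (LTU k) v T false ≤ effProb (LTU k) v S false := by
  have hc : 0 < effProb (LTU k) v (∅ : Finset (Fin n)) false := effProb_pos hv ∅
  have hT := effProb_pos hv T
  have hS := effProb_pos hv S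
  rw [causeRatio, causeRatio,
    Real.logb_le_logb one_lt_two (div_pos hT hc) (div_pos hS hc),
    div_le_div_iff_of_pos_right hc]

lemma causeRatio_eq_iff (hv : ones v < k) (T S : Finset (Fin n)) :
    causeRatio (LTU k) v T false = causeRatio (LTU k) v S false ↔
      effProb (LTU k) v T false = effProb (LTU k) v S false := by
  constructor
  · intro h
    exact le_antisymm ((causeRatio_le_iff hv T S).mp h.le)
      ((causeRatio_le_iff hv S T).mp h.ge)
  · intro h; rw [causeRatio, causeRatio, h]

lemma exists_good (hkn : k ≤ n) (hv : ones v < k) :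
    ∃ S0 : Finset (Fin n), S0.card = n - k + 1 ∧ ∀ i ∈ S0, v i = false := by
  have h := ones_add_zeros v
  obtain ⟨S0, hsub, hcard⟩ := Finset.exists_subset_card_eq
    (s := univ.filter fun i => v i = false) (n := n - k + 1) (by omega)
  exact ⟨S0, hcard, fun i hi => (mem_filter.mp (hsub hi)).2⟩

lemma zS_eq_card {S : Finset (Fin n)} (h : ∀ i ∈ S, v i = false) : zS v S = S.card := by
  rw [zS, Finset.filter_true_of_mem h]

lemma good_eff_one (hk1 : 1 ≤ k) (hkn : k ≤ n) {S : Finset (Fin n)}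
    (hcard : S.card = n - k + 1) (hall : ∀ i ∈ S, v i = false) :
    effProb (LTU k) v S false = 1 := by
  rw [effProb_eq_one_iff, key_iff hk1 hkn, zS_eq_card hall, hcard]

theorem ltu_actual_cause_of_off_state' (hk1 : 1 ≤ k) (hkn : k ≤ n) (hv : ones v < k) :
    {S : Finset (Fin n) | (∀ T : Finset (Fin n),
        causeRatio (LTU k) v T false ≤ causeRatio (LTU k) v S false) ∧
      ∀ T ⊂ S, causeRatio (LTU k) v T false ≠ causeRatio (LTU k) v S false} =
      {S : Finset (Fin n) | S.card = n - k + 1 ∧ ∀ i ∈ S, v i = false} := by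
  obtain ⟨S0, hS0card, hS0all⟩ := exists_good hkn hv
  have hS0 : effProb (LTU k) v S0 false = 1 := good_eff_one hk1 hkn hS0card hS0all
  have hmax : ∀ S : Finset (Fin n),
      (∀ T : Finset (Fin n), causeRatio (LTU k) v T false ≤ causeRatio (LTU k) v S false) ↔
      effProb (LTU k) v S false = 1 := by
    intro S
    constructor
    · intro h
      have := (causeRatio_le_iff hv S0 S).mp (h S0)
      rw [hS0] at this
      exact le_antisymm (effProb_le_one S) this
    · intro h T
      rw [causeRatio_le_iff hv]
      rw [h]; exact effProb_le_one T
  ext S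
  simp only [Set.mem_setOf_eq, hmax]
  constructor
  · rintro ⟨h1, h2⟩
    -- h1 : effProb = 1, i.e. n-k+1 ≤ zS v S
    have hz : n - k + 1 ≤ zS v S := by
      rw [effProb_eq_one_iff, key_iff hk1 hkn] at h1; exact h1
    have hmin : ∀ T ⊂ S, ¬ (n - k + 1 ≤ zS v T) := by
      intro T hT hTz
      apply h2 T hT
      rw [causeRatio_eq_iff hv, h1]
      rw [effProb_eq_one_iff, key_iff hk1 hkn]
      exact hTz
    have hall : ∀ i ∈ S, v i = false := by
      by_contra hc
      push_neg at hc
      obtain ⟨j, hjS, hjv⟩ := hc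
      refine hmin (S.filter fun i => v i = false) ?_ ?_
      · refine ⟨Finset.filter_subset _ _, fun hsub => ?_⟩
        have := hsub hjS
        simp only [mem_filter] at this
        simp [this.2] at hjv
      · rw [show zS v (S.filter fun i => v i = false) = zS v S from ?_]
        · exact hz
        · rw [zS, zS, Finset.filter_filter]
          congr 1
          ext i; simp
    have hzcard : zS v S = S.card := zS_eq_card hall
    have hcard : S.card = n - k + 1 := by
      by_contra hc
      have hgt : n - k + 1 < S.card := by omega
      have hne : S.Nonempty := Finset.card_pos.mp (by omega)
      obtain ⟨j, hj⟩ := hne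
      refine hmin (S.erase j) (Finset.erase_ssubset hj) ?_
      have : zS v (S.erase j) = S.card - 1 := by
        rw [zS_eq_card (fun i hi => hall i (Finset.mem_of_mem_erase hi)),
          Finset.card_erase_of_mem hj]
      omega
    exact ⟨hcard, hall⟩
  · rintro ⟨hcard, hall⟩
    refine ⟨good_eff_one hk1 hkn hcard hall, fun T hT heq => ?_⟩
    rw [causeRatio_eq_iff hv, good_eff_one hk1 hkn hcard hall,
      effProb_eq_one_iff, key_iff hk1 hkn] at heq
    have hTz : zS v T ≤ T.card := Finset.card_filter_le _ _
    have hTcard : T.card < S.card := Finset.card_lt_card hT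
    omega
end final

/-- For an LTU in the off state (`Σ v_i < k`, so `Y = 0`), the actual-cause candidate set of
`{Y = 0}` is exactly the set of restrictions `v|S` with `|S| = n − k + 1` and all fixed inputs
in state `0`: an LTU in the off state behaves like an LTU with `0`/`1` reversed and threshold
`n − k + 1`. -/
theorem ltu_actual_cause_of_off_state (n k : ℕ) (hk1 : 1 ≤ k) (hkn : k ≤ n)
    (v : Fin n → Bool) (hv : ones v < k) :
    causeCandidates (LTU k) v false =
      {S : Finset (Fin n) | S.card = n - k + 1 ∧ ∀ i ∈ S, v i = false} :=
  ltu_actual_cause_of_off_state' hk1 hkn hv
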